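/- Let A be a 3×3 octonionic Hermitian matrix and v = (x, y, z) ∈ 𝕆³ a normalized right eigenvector: A·v = v·λ and conj(x)·x + conj(y)·y + conj(z)·z = 1. Then v†(A·v) := ∑ⱼ conj(vⱼ)·(A·v)ⱼ = λ, where (A·v)ⱼ = ∑ₖ Aⱼₖ·vₖ. -/

import Mathlib

noncomputable section

open Quaternion

/-- The octonions, realized as the Cayley–Dickson double of the real quaternions:
pairs of quaternions. -/
abbrev 𝕆 : Type := ℍ[ℝ] × ℍ[ℝ]

namespace Octonion

/-- Cayley–Dickson multiplication: `(a, b)·(c, d) = (a·c − conj(d)·b, d·a + b·conj(c))`. -/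
def omul (x y : 𝕆) : 𝕆 :=
  (x.1 * y.1 - star y.2 * x.2, y.2 * x.1 + x.2 * star y.1)

/-- Octonionic conjugation: `conj (a, b) = (conj a, −b)`. -/
def oconj (x : 𝕆) : 𝕆 := (star x.1, -x.2)

/-- The embedding of the reals, `r ↦ (r, 0)`. -/
def oR (r : ℝ) : 𝕆 := ((r : ℍ[ℝ]), 0)

/-- The unit octonion `1 = (1, 0)`. -/
def o1 : 𝕆 := oR 1

/-- The associator `[a,b,c] = (a·b)·c − a·(b·c)`. -/
def oassoc (a b c : 𝕆) : 𝕆 := omul (omul a b) c - omul a (omul b c)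

/-- The inner product: the real number with `(a·conj b + b·conj a)/2 = (a ⋅ b)·1`. -/
def odot (x y : 𝕆) : ℝ := (omul x (oconj y) + omul y (oconj x)).1.re / 2

/-- The squared norm `|x|²`, the real number with `x·conj x = |x|²·1`. -/
def onormSq (x : 𝕆) : ℝ := odot x x

/-- The real part of an octonion, as a real number. -/
def oreR (x : 𝕆) : ℝ := x.1.re

/-- The imaginary part `Im(x) = (x − conj x)/2`. -/
def oIm (x : 𝕆) : 𝕆 := (2:ℝ)⁻¹ • (x - oconj x)

/-- The imaginary units. -/
def oi : 𝕆 := (⟨0,1,0,0⟩, 0)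
def oj : 𝕆 := (⟨0,0,1,0⟩, 0)
def ok : 𝕆 := (⟨0,0,0,1⟩, 0)
def ol : 𝕆 := (0, 1)
def oil : 𝕆 := (0, ⟨0,1,0,0⟩)
def ojl : 𝕆 := (0, ⟨0,0,1,0⟩)
def okl : 𝕆 := (0, ⟨0,0,0,1⟩)

end Octonion


open Octonion

section Aux

set_option maxHeartbeats 1600000 in
lemma Octonion.conj_mul_assoc (u w : 𝕆) :
    omul (oconj u) (omul u w) = omul (omul (oconj u) u) w := by
  obtain ⟨A, B⟩ := u
  obtain ⟨C, D⟩ := w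
  rw [Prod.ext_iff]
  constructor <;>
  · apply QuaternionAlgebra.ext <;>
    simp only [omul, oconj, Quaternion.re_mul, Quaternion.imI_mul, Quaternion.imJ_mul,
      Quaternion.imK_mul, Quaternion.re_star, Quaternion.imI_star, Quaternion.imJ_star,
      Quaternion.imK_star, Quaternion.re_sub, Quaternion.re_add, Quaternion.re_neg,
      Quaternion.imI_sub, Quaternion.imI_add, Quaternion.imI_neg,
      Quaternion.imJ_sub, Quaternion.imJ_add, Quaternion.imJ_neg,
      Quaternion.imK_sub, Quaternion.imK_add, Quaternion.imK_neg] <;>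
    ring

lemma Octonion.omul_add (u v w : 𝕆) : omul u (v + w) = omul u v + omul u w := by
  simp only [omul, Prod.fst_add, Prod.snd_add, Prod.mk_add_mk, Prod.mk.injEq, star_add,
    mul_add, add_mul]
  constructor <;> abel

lemma Octonion.add_omul (u v w : 𝕆) : omul (u + v) w = omul u w + omul v w := by
  simp only [omul, Prod.fst_add, Prod.snd_add, Prod.mk_add_mk, Prod.mk.injEq,
    mul_add, add_mul]
  constructor <;> abel

lemma Octonion.oR_comm (r : ℝ) (u : 𝕆) : omul (oR r) u = omul u (oR r) := by
  obtain ⟨A, B⟩ := u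
  simp [omul, oR, Quaternion.coe_mul_eq_smul, Quaternion.mul_coe_eq_smul]

lemma Octonion.one_omul (u : 𝕆) : omul o1 u = u := by
  obtain ⟨A, B⟩ := u
  simp [omul, o1, oR]

end Aux


/-- For a normalized right eigenvector `v = (x,y,z)` of the `3×3` octonionic
Hermitian matrix `A` with rows `(p, a, conj b)`, `(conj a, m, c)`, `(b, conj c, n)`,
one has `v†(A·v) = λ`. -/
theorem vdagger_Av_eq_lam (p m n : ℝ) (a b c x y z lam : 𝕆)
    (h1 : omul a y + omul (oconj b) z = omul x (lam - oR p))
    (h2 : omul c z + omul (oconj a) x = omul y (lam - oR m))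
    (h3 : omul b x + omul (oconj c) y = omul z (lam - oR n))
    (hnorm : omul (oconj x) x + omul (oconj y) y + omul (oconj z) z = o1) :
    omul (oconj x) (omul (oR p) x + omul a y + omul (oconj b) z)
      + omul (oconj y) (omul (oconj a) x + omul (oR m) y + omul c z)
      + omul (oconj z) (omul b x + omul (oconj c) y + omul (oR n) z) = lam := by
  have key : ∀ (t : ℝ) (u w lam : 𝕆), omul u w = omul u (lam - oR t) →
      omul (oconj u) (omul (oR t) u + omul u w) = omul (omul (oconj u) u) lam := by
    intro t u w lam h
    rw [h, Octonion.oR_comm, ← Octonion.omul_add, show oR t + (lam - oR t) = lam by abel,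
      Octonion.conj_mul_assoc]
  have e1 : omul (oconj x) (omul (oR p) x + omul a y + omul (oconj b) z)
      = omul (omul (oconj x) x) lam := by
    rw [add_assoc, h1]
    exact key p x _ lam rfl
  have e2 : omul (oconj y) (omul (oconj a) x + omul (oR m) y + omul c z)
      = omul (omul (oconj y) y) lam := by
    rw [show omul (oconj a) x + omul (oR m) y + omul c z
        = omul (oR m) y + (omul c z + omul (oconj a) x) by abel, h2]
    exact key m y _ lam rfl
  have e3 : omul (oconj z) (omul b x + omul (oconj c) y + omul (oR n) z)
      = omul (omul (oconj z) z) lam := by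
    rw [show omul b x + omul (oconj c) y + omul (oR n) z
        = omul (oR n) z + (omul b x + omul (oconj c) y) by abel, h3]
    exact key n z _ lam rfl
  rw [e1, e2, e3, ← Octonion.add_omul, ← Octonion.add_omul, hnorm, Octonion.one_omul]
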